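/- If N is a normal subgroup of a finite group G and gN is a real element of odd order in G/N, then there exists a real element h ∈ G of odd order with hN conjugate to gN in G/N. -/

import Mathlib

open Pointwise

private lemma oddPow {Γ : Type*} [Group Γ] {b a : Γ} (h : b * a * b⁻¹ = a⁻¹) :
    ∀ v : ℕ, Odd v → b ^ v * a * (b ^ v)⁻¹ = a⁻¹ := by
  have key : ∀ v : ℕ, Odd v → ((MulAut.conj b) ^ v) a = a⁻¹ := by
    have hφ : (MulAut.conj b) a = a⁻¹ := by rw [MulAut.conj_apply]; exact h
    have heven : ∀ k : ℕ, ((MulAut.conj b) ^ (2 * k)) a = a := by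
      intro k
      induction k with
      | zero => rfl
      | succ k ih =>
        have : 2 * (k + 1) = (2 * k + 1) + 1 := by ring
        rw [this, pow_succ', MulAut.mul_apply, pow_succ', MulAut.mul_apply, ih, hφ,
          map_inv, hφ, inv_inv]
    rintro v ⟨k, rfl⟩
    rw [pow_succ, MulAut.mul_apply, hφ, map_inv, heven k]
  intro v hv
  have := key v hv
  rwa [← map_pow, MulAut.conj_apply] at this

private lemma powLemma {Γ : Type*} [Group Γ] (y : Γ) (hy : orderOf y ≠ 0) (M : ℕ) (hM : Odd M) :
    ∃ e : ℕ, Odd (orderOf (y ^ e)) ∧ e ≡ 1 [MOD M] := by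
  have hM0 : 0 < M := hM.pos
  set n := orderOf y with hn
  set a := n.factorization 2 with ha
  refine ⟨2 ^ (a * M.totient), ?_, ?_⟩
  · -- odd order
    have hvodd : ¬ 2 ∣ ordCompl[2] n := Nat.not_dvd_ordCompl Nat.prime_two hy
    have hdvd : orderOf (y ^ 2 ^ (a * M.totient)) ∣ ordCompl[2] n := by
      apply orderOf_dvd_of_pow_eq_one
      rw [← pow_mul]
      apply orderOf_dvd_iff_pow_eq_one.mp
      rw [← hn]
      calc n = 2 ^ a * ordCompl[2] n := (Nat.ordProj_mul_ordCompl_eq_self n 2).symm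
      _ ∣ 2 ^ (a * M.totient) * ordCompl[2] n := by
          apply Nat.mul_dvd_mul_right
          exact pow_dvd_pow 2 (Nat.le_mul_of_pos_right a (Nat.totient_pos.mpr hM0))
    rw [Nat.odd_iff]
    have h2 : ¬ 2 ∣ orderOf (y ^ 2 ^ (a * M.totient)) := fun hc => hvodd (hc.trans hdvd)
    rw [Nat.dvd_iff_mod_eq_zero] at h2
    omega
  · -- ≡ 1 mod M
    have hcop : Nat.Coprime 2 M := (Nat.prime_two.coprime_iff_not_dvd).mpr (by
      rw [Nat.dvd_iff_mod_eq_zero]; rw [Nat.odd_iff] at hM; omega)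
    calc 2 ^ (a * M.totient) = (2 ^ M.totient) ^ a := by rw [← pow_mul, mul_comm]
    _ ≡ 1 ^ a [MOD M] := (Nat.ModEq.pow_totient hcop).pow a
    _ = 1 := one_pow a

private lemma fixLemma {α : Type*} [Finite α] (f : α → α) (k : ℕ) (hf : f^[2 ^ k] = id)
    (hodd : Odd (Nat.card α)) : ∃ a, f a = a := by
  haveI : Fact (Nat.Prime 2) := ⟨Nat.prime_two⟩
  have hpos : 0 < 2 ^ k := pow_pos (by norm_num) k
  have hinv1 : Function.LeftInverse f^[2 ^ k - 1] f := by
    intro a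
    calc f^[2 ^ k - 1] (f a) = f^[2 ^ k - 1 + 1] a := (Function.iterate_succ_apply f _ a).symm
    _ = a := by rw [Nat.sub_add_cancel hpos, hf]; rfl
  have hinv2 : Function.RightInverse f^[2 ^ k - 1] f := by
    intro a
    calc f (f^[2 ^ k - 1] a) = f^[2 ^ k - 1 + 1] a := (Function.iterate_succ_apply' f _ a).symm
    _ = a := by rw [Nat.sub_add_cancel hpos, hf]; rfl
  set σ : Equiv.Perm α := ⟨f, f^[2 ^ k - 1], hinv1, hinv2⟩ with hσ
  have hσpow : ∀ (n : ℕ) (x : α), (σ ^ n) x = f^[n] x := by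
    intro n
    induction n with
    | zero => intro x; rfl
    | succ n ih =>
      intro x
      rw [pow_succ', Equiv.Perm.mul_apply, ih]
      exact (Function.iterate_succ_apply' f n x).symm
  have hσ1 : σ ^ (2 ^ k) = 1 := by
    ext x
    rw [hσpow, hf]; rfl
  have hHp : IsPGroup 2 (Subgroup.zpowers σ) := by
    rintro ⟨h, hh⟩
    obtain ⟨m, rfl⟩ := Subgroup.mem_zpowers_iff.mp hh
    refine ⟨k, ?_⟩
    apply Subtype.ext
    have : ((σ ^ m) ^ (2 ^ k : ℕ)) = 1 := by
      rw [← zpow_natCast (σ ^ m) (2 ^ k), ← zpow_mul, mul_comm, zpow_mul, zpow_natCast, hσ1,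
        one_zpow]
    simpa using this
  have hcard : ¬ (2 ∣ Nat.card α) := by
    rw [Nat.dvd_iff_mod_eq_zero]; rw [Nat.odd_iff] at hodd; omega
  obtain ⟨a, ha⟩ := hHp.nonempty_fixed_point_of_prime_not_dvd_card α hcard
  refine ⟨a, ?_⟩
  have := ha ⟨σ, Subgroup.mem_zpowers σ⟩
  exact (by simpa using this : σ a = a)

private lemma caseA {G : Type*} [Group G] [Finite G] (N : Subgroup G) [N.Normal]
    (hN : Odd (Nat.card N)) (g : G)
    (hreal : IsConj ((g : G ⧸ N)) ((g : G ⧸ N))⁻¹) (hodd : Odd (orderOf (g : G ⧸ N))) :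
    ∃ h : G, IsConj h h⁻¹ ∧ Odd (orderOf h) ∧ ((h : G ⧸ N) = (g : G ⧸ N)) := by
  obtain ⟨cbar, hc⟩ := isConj_iff.mp hreal
  obtain ⟨c, rfl⟩ := QuotientGroup.mk_surjective cbar
  -- x := odd-part power of c, a 2-element whose image inverts g mod N
  set t := (orderOf c).factorization 2 with ht
  set x := c ^ (ordCompl[2] (orderOf c)) with hx
  have hordc : orderOf c ≠ 0 := (orderOf_pos c).ne'
  have hx2 : x ^ (2 ^ t) = 1 := by
    rw [hx, ← pow_mul, mul_comm, ← ht, Nat.ordProj_mul_ordCompl_eq_self, pow_orderOf_eq_one]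
  have hvodd : Odd (ordCompl[2] (orderOf c)) := by
    have := Nat.not_dvd_ordCompl Nat.prime_two hordc
    rw [Nat.odd_iff]; rw [Nat.dvd_iff_mod_eq_zero] at this; omega
  have hinv : (x : G ⧸ N) * (g : G ⧸ N) * (x : G ⧸ N)⁻¹ = (g : G ⧸ N)⁻¹ := by
    have : ((c ^ (ordCompl[2] (orderOf c)) : G) : G ⧸ N)
        = ((c : G ⧸ N)) ^ (ordCompl[2] (orderOf c)) := by
      push_cast; rfl
    rw [hx, this]
    exact oddPow hc _ hvodd
  have hinv' : (x : G ⧸ N) * (g : G ⧸ N)⁻¹ * (x : G ⧸ N)⁻¹ = (g : G ⧸ N) := by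
    have h' := congrArg Inv.inv hinv
    simp only [mul_inv_rev, inv_inv] at h'
    rw [mul_assoc]
    exact h'
  -- the coset as a type
  let α := {w : G // (w : G ⧸ N) = (g : G ⧸ N)}
  have hcardα : Nat.card α = Nat.card N := by
    apply Nat.card_congr
    refine ⟨fun w => ⟨(w : G)⁻¹ * g, ?_⟩, fun n => ⟨g * (n : G)⁻¹, ?_⟩, ?_, ?_⟩
    · exact QuotientGroup.eq.mp w.2
    · apply QuotientGroup.eq.mpr
      have : (g * (↑n)⁻¹)⁻¹ * g = (↑n : G) := by group
      rw [this]; exact n.2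
    · intro w; apply Subtype.ext; simp [mul_assoc]
    · intro n; apply Subtype.ext; simp
  have hoddα : Odd (Nat.card α) := hcardα ▸ hN
  -- the twisted involution-ish map
  have fmem : ∀ w : α, ((x * (w : G)⁻¹ * x⁻¹ : G) : G ⧸ N) = (g : G ⧸ N) := by
    intro w
    have : ((x * (w : G)⁻¹ * x⁻¹ : G) : G ⧸ N)
        = (x : G ⧸ N) * ((w : G) : G ⧸ N)⁻¹ * (x : G ⧸ N)⁻¹ := by push_cast; rfl
    rw [this, w.2, hinv']
  let f : α → α := fun w => ⟨x * (w : G)⁻¹ * x⁻¹, fmem w⟩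
  have hfval : ∀ w : α, (f w : G) = x * (w : G)⁻¹ * x⁻¹ := fun w => rfl
  have hff : ∀ w : α, (f^[2] w : G) = x ^ 2 * (w : G) * (x ^ 2)⁻¹ := by
    intro w
    rw [show (2 : ℕ) = 1 + 1 from rfl, Function.iterate_succ_apply', Function.iterate_one,
      hfval, hfval, pow_two]
    group
  have hiter : ∀ (s : ℕ) (w : α), ((f^[2])^[s] w : G) = x ^ (2 * s) * (w : G) * (x ^ (2 * s))⁻¹ := by
    intro s
    induction s with
    | zero => intro w; simp
    | succ s ih =>
      intro w
      rw [Function.iterate_succ_apply', hff, ih, pow_two]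
      group
  have hfid : f^[2 ^ (t + 1)] = id := by
    funext w
    apply Subtype.ext
    rw [show (2 : ℕ) ^ (t + 1) = 2 * 2 ^ t from by ring, Function.iterate_mul, hiter]
    have : x ^ (2 * 2 ^ t) = 1 := by
      rw [show 2 * 2 ^ t = 2 ^ t * 2 from by ring, pow_mul, hx2, one_pow]
    rw [this]
    simp
  obtain ⟨w, hw⟩ := fixLemma f (t + 1) hfid hoddα
  have hwval : x * (w : G)⁻¹ * x⁻¹ = (w : G) := congrArg Subtype.val hw
  have hwinv : x * (w : G) * x⁻¹ = (w : G)⁻¹ := by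
    have h' := congrArg Inv.inv hwval
    simp only [mul_inv_rev, inv_inv] at h'
    rw [mul_assoc]
    exact h'
  -- extract the odd part
  have hordw : orderOf (w : G) ≠ 0 := (orderOf_pos _).ne'
  have hMpos : Odd (orderOf (g : G ⧸ N)) := hodd
  obtain ⟨e, he1, he2⟩ := powLemma (w : G) hordw (orderOf (g : G ⧸ N)) hMpos
  refine ⟨(w : G) ^ e, ?_, he1, ?_⟩
  · apply isConj_iff.mpr
    refine ⟨x, ?_⟩
    rw [← conj_pow, hwinv, inv_pow]
  · have hcast : (((w : G) ^ e : G) : G ⧸ N) = (((w : G) : G ⧸ N)) ^ e := by push_cast; rfl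
    rw [hcast, w.2]
    have : (g : G ⧸ N) ^ e = (g : G ⧸ N) ^ 1 := pow_eq_pow_iff_modEq.mpr he2
    simpa using this

private lemma caseB {G : Type*} [Group G] [Finite G] (K : Subgroup G) [K.Normal]
    [IsMulCommutative K] (hK : IsPGroup 2 K) (g : G)
    (hreal : IsConj ((g : G ⧸ K)) ((g : G ⧸ K))⁻¹) (hodd : Odd (orderOf (g : G ⧸ K))) :
    ∃ h : G, IsConj h h⁻¹ ∧ Odd (orderOf h) ∧ ((h : G ⧸ K) = (g : G ⧸ K)) := by
  haveI : Fact (Nat.Prime 2) := ⟨Nat.prime_two⟩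
  letI : CommGroup K := { (inferInstance : Group K) with
    mul_comm := fun a b => (IsMulCommutative.is_comm (M := K)).comm a b }
  -- replace g by an odd-order element y in the same coset
  obtain ⟨e, he1, he2⟩ := powLemma g (orderOf_pos g).ne' (orderOf (g : G ⧸ K)) hodd
  set y := g ^ e with hy
  have hycoset : (y : G ⧸ K) = (g : G ⧸ K) := by
    have hcast : ((y : G) : G ⧸ K) = ((g : G ⧸ K)) ^ e := by rw [hy]; push_cast; rfl
    rw [hcast]
    have : (g : G ⧸ K) ^ e = (g : G ⧸ K) ^ 1 := pow_eq_pow_iff_modEq.mpr he2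
    simpa using this
  set m := orderOf y with hm
  have hmodd : Odd m := he1
  have hm0 : m ≠ 0 := (orderOf_pos y).ne'
  -- conjugating element
  obtain ⟨cbar, hc⟩ := isConj_iff.mp hreal
  obtain ⟨x, rfl⟩ := QuotientGroup.mk_surjective cbar
  set z := x * y⁻¹ * x⁻¹ with hz
  have hzcoset : (z : G ⧸ K) = (y : G ⧸ K) := by
    have hcast : ((z : G) : G ⧸ K) = (x : G ⧸ K) * ((y : G ⧸ K))⁻¹ * (x : G ⧸ K)⁻¹ := by
      rw [hz]; push_cast; rfl
    rw [hcast, hycoset]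
    have h' := congrArg Inv.inv hc
    simp only [mul_inv_rev, inv_inv] at h'
    rw [mul_assoc]
    exact h'
  have hordz : orderOf z = m := by
    have h1 : z = (MulAut.conj x) y⁻¹ := by rw [MulAut.conj_apply, hz]
    rw [h1]
    have h2 := orderOf_injective (MulAut.conj x).toMonoidHom (MulAut.conj x).injective y⁻¹
    simp only [MulEquiv.coe_toMonoidHom] at h2
    rw [h2, orderOf_inv]
  -- cocycle values
  have hdmem : ∀ k : ℕ, y ^ k * (z ^ k)⁻¹ ∈ K := by
    intro k
    rw [← QuotientGroup.eq_one_iff]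
    have : ((y ^ k * (z ^ k)⁻¹ : G) : G ⧸ K)
        = ((y : G ⧸ K)) ^ k * (((z : G ⧸ K)) ^ k)⁻¹ := by push_cast; rfl
    rw [this, hzcoset]
    simp
  set d : ℕ → K := fun k => ⟨y ^ k * (z ^ k)⁻¹, hdmem k⟩ with hd
  have hd0 : d 0 = 1 := by apply Subtype.ext; simp [hd]
  have hdm : d m = 1 := by
    apply Subtype.ext
    have h1 : y ^ m = 1 := by rw [hm]; exact pow_orderOf_eq_one y
    have h2 : z ^ m = 1 := by rw [← hordz]; exact pow_orderOf_eq_one z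
    simp [hd, h1, h2]
  -- conjugation by z as a hom of K
  set φ : K →* K := {
    toFun := fun a => ⟨z * (a : G) * z⁻¹, Subgroup.Normal.conj_mem ‹K.Normal› _ a.2 z⟩
    map_one' := by apply Subtype.ext; simp
    map_mul' := by intro a b; apply Subtype.ext; push_cast; group } with hφ
  have hφval : ∀ a : K, (φ a : G) = z * (a : G) * z⁻¹ := fun a => rfl
  -- key recursion d (k+1) = d 1 * φ (d k)
  have hrec : ∀ k : ℕ, d (k + 1) = d 1 * φ (d k) := by
    intro k
    apply Subtype.ext
    rw [Subgroup.coe_mul, hφval]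
    show y ^ (k+1) * (z ^ (k+1))⁻¹ = (y ^ 1 * (z ^ 1)⁻¹) * (z * (y ^ k * (z ^ k)⁻¹) * z⁻¹)
    rw [pow_succ', pow_succ']
    group
  set s : K := ∏ k ∈ Finset.range m, d k with hs
  have hφs : φ s = (d 1)⁻¹ ^ m * s := by
    rw [hs, map_prod]
    have h1 : ∀ k ∈ Finset.range m, φ (d k) = (d 1)⁻¹ * d (k + 1) := by
      intro k _
      rw [hrec k]
      group
    rw [Finset.prod_congr rfl h1, Finset.prod_mul_distrib, Finset.prod_const,
      Finset.card_range]
    congr 1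
    -- ∏ k in range m, d (k+1) = ∏ k in range m, d k
    have h2 : ∏ k ∈ Finset.range (m + 1), d k = (∏ k ∈ Finset.range m, d (k + 1)) * d 0 :=
      Finset.prod_range_succ' d m
    rw [Finset.prod_range_succ, hd0, hdm, mul_one, mul_one] at h2
    exact h2.symm
  -- choose inverse of m mod card K
  have hcard2 : ∃ b : ℕ, Nat.card K = 2 ^ b := IsPGroup.iff_card.mp hK
  obtain ⟨b, hb⟩ := hcard2
  have hcardpos : 0 < Nat.card K := Nat.card_pos
  have hcop : Nat.Coprime m (Nat.card K) := by
    rw [hb]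
    apply Nat.Coprime.pow_right
    rw [Nat.coprime_comm]
    apply (Nat.prime_two.coprime_iff_not_dvd).mpr
    rw [Nat.dvd_iff_mod_eq_zero]
    rw [Nat.odd_iff] at hmodd; omega
  have htot : m ^ Nat.totient (Nat.card K) ≡ 1 [MOD Nat.card K] := Nat.ModEq.pow_totient hcop
  have htotpos : 0 < Nat.totient (Nat.card K) := Nat.totient_pos.mpr hcardpos
  set m' := m ^ (Nat.totient (Nat.card K) - 1) with hm'
  have hmm' : m * m' ≡ 1 [MOD Nat.card K] := by
    rw [hm']
    calc m * m ^ (Nat.totient (Nat.card K) - 1) = m ^ Nat.totient (Nat.card K) := by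
          rw [← pow_succ']
          congr 1
          omega
    _ ≡ 1 [MOD Nat.card K] := htot
  set n : K := s ^ m' with hn
  have hkey : n * (φ n)⁻¹ = d 1 := by
    rw [hn, map_pow]
    have hc1 : s ^ m' * (φ s ^ m')⁻¹ = (s * (φ s)⁻¹) ^ m' := by
      rw [mul_pow, inv_pow]
    rw [hc1, hφs]
    have hc2 : s * ((d 1)⁻¹ ^ m * s)⁻¹ = (d 1) ^ m := by group
    rw [hc2, ← pow_mul]
    -- (d 1) ^ (m * m') = d 1 since m * m' ≡ 1 mod card K and (d 1) ^ card K = 1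
    have hc3 : (d 1) ^ (m * m') = (d 1) ^ 1 := by
      apply pow_eq_pow_iff_modEq.mpr
      have hdvd : orderOf (d 1) ∣ Nat.card K := orderOf_dvd_natCard (d 1)
      exact (Nat.ModEq.of_dvd hdvd hmm').symm.symm
    simpa using hc3
  -- unfold to G : n * z * n⁻¹ = y
  have hkeyG : (n : G) * z * (n : G)⁻¹ = y := by
    have hval := congrArg (Subtype.val : K → G) hkey
    rw [Subgroup.coe_mul] at hval
    have h2 : ((φ n)⁻¹ : K) = (⟨(z * (n : G) * z⁻¹)⁻¹, K.inv_mem (Subgroup.Normal.conj_mem ‹K.Normal› _ n.2 z)⟩ : K) := by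
      apply Subtype.ext
      simp [hφval]
    rw [h2] at hval
    have h3 : ((d 1 : K) : G) = y * z⁻¹ := by simp [hd]
    rw [h3] at hval
    calc (n : G) * z * (n : G)⁻¹
        = ((n : G) * (z * (n : G) * z⁻¹)⁻¹) * z := by group
    _ = (y * z⁻¹) * z := by rw [← hval]
    _ = y := by group
  refine ⟨y, ?_, he1, hycoset⟩
  have hconj : (↑n * x) * y⁻¹ * (↑n * x)⁻¹ = y := by
    have hstep : ((n : G) * x) * y⁻¹ * ((n : G) * x)⁻¹ = (n : G) * (x * y⁻¹ * x⁻¹) * (n : G)⁻¹ := by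
      group
    rw [hstep, ← hz]
    exact hkeyG
  exact (isConj_iff.mpr ⟨↑n * x, hconj⟩).symm

universe u

private lemma mainLemma : ∀ (nn : ℕ) (G : Type u) [Group G] [Finite G],
    Nat.card G ≤ nn →
    ∀ (N : Subgroup G) [N.Normal] (g : G),
    IsConj ((g : G ⧸ N)) ((g : G ⧸ N))⁻¹ → Odd (orderOf (g : G ⧸ N)) →
    ∃ h : G, IsConj h h⁻¹ ∧ Odd (orderOf h) ∧ (h : G ⧸ N) = (g : G ⧸ N) := by
  intro nn
  induction nn with
  | zero =>
    intro G _ _ hle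
    have : 0 < Nat.card G := Nat.card_pos
    omega
  | succ nn ih =>
    intro G _ _ hle N _ g hreal hodd
    haveI : Fact (Nat.Prime 2) := ⟨Nat.prime_two⟩
    haveI : Finite (Sylow 2 ↥N) := by
      apply Finite.of_injective (fun P : Sylow 2 ↥N => (P : Subgroup ↥N))
      intro P1 P2 h
      exact Sylow.ext h
    obtain ⟨Q⟩ : Nonempty (Sylow 2 ↥N) := Sylow.nonempty
    by_cases hnorm : Subgroup.normalizer (((Q : Subgroup ↥N).map N.subtype : Subgroup G) : Set G) = ⊤
    · -- the Sylow 2-subgroup of N is normal in G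
      haveI hQ'norm : ((Q : Subgroup ↥N).map N.subtype).Normal :=
        Subgroup.normalizer_eq_top_iff.mp hnorm
      by_cases hbot : (Q : Subgroup ↥N).map N.subtype = ⊥
      · -- N has odd order
        refine caseA N ?_ g hreal hodd
        have hQbot : (Q : Subgroup ↥N) = ⊥ := by
          have := (Subgroup.map_eq_bot_iff (Q : Subgroup ↥N)).mp hbot
          rwa [Subgroup.ker_subtype, le_bot_iff] at this
        have hcardQ : Nat.card Q = 2 ^ (Nat.card ↥N).factorization 2 :=
          Sylow.card_eq_multiplicity Q
        rw [hQbot, Subgroup.card_bot] at hcardQ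
        have hfact0 : (Nat.card ↥N).factorization 2 = 0 := by
          by_contra hne
          have : (2:ℕ) ^ (Nat.card ↥N).factorization 2 = 1 := hcardQ.symm
          rw [Nat.pow_eq_one] at this
          omega
        have hndvd : ¬ 2 ∣ Nat.card ↥N := by
          intro hdvd
          have hne : Nat.card ↥N ≠ 0 := Nat.card_pos.ne'
          have := (Nat.factorization_eq_zero_iff (Nat.card ↥N) 2).mp hfact0
          rcases this with h | h | h
          · exact h Nat.prime_two
          · exact h hdvd
          · exact hne h
        rw [Nat.odd_iff]
        rw [Nat.dvd_iff_mod_eq_zero] at hndvd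
        omega
      · -- K := image in G of the center of the normal Sylow 2-subgroup
        set Q' : Subgroup G := (Q : Subgroup ↥N).map N.subtype with hQ'def
        haveI hQ'norm' : Q'.Normal := hQ'norm
        have hQ'p : IsPGroup 2 ↥Q' := Q.2.map N.subtype
        haveI hQ'nontriv : Nontrivial ↥Q' := (Subgroup.nontrivial_iff_ne_bot Q').mpr hbot
        set K : Subgroup G := (Subgroup.center ↥Q').map Q'.subtype with hKdef
        have hKleQ' : K ≤ Q' := Subgroup.map_subtype_le _
        have hKle : K ≤ N := hKleQ'.trans (Subgroup.map_subtype_le _)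
        -- elements of K : characterization
        have hKmem : ∀ {k : G}, k ∈ K → k ∈ Q' ∧ ∀ q ∈ Q', q * k = k * q := by
          intro k hk
          obtain ⟨k', hk', rfl⟩ := Subgroup.mem_map.mp hk
          constructor
          · exact k'.2
          · intro q hq
            have := (Subgroup.mem_center_iff.mp hk') ⟨q, hq⟩
            exact congrArg Subtype.val this
        haveI hKnormal : K.Normal := by
          constructor
          intro k hk w
          obtain ⟨hkQ', hkc⟩ := hKmem hk
          apply Subgroup.mem_map.mpr
          refine ⟨⟨w * k * w⁻¹, Subgroup.Normal.conj_mem hQ'norm' k hkQ' w⟩, ?_, rfl⟩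
          apply Subgroup.mem_center_iff.mpr
          rintro ⟨q, hq⟩
          apply Subtype.ext
          show q * (w * k * w⁻¹) = (w * k * w⁻¹) * q
          have hq' : w⁻¹ * q * w ∈ Q' := by
            have := Subgroup.Normal.conj_mem hQ'norm' q hq w⁻¹
            simpa using this
          have hcomm := hkc _ hq'
          calc q * (w * k * w⁻¹) = w * ((w⁻¹ * q * w) * k) * w⁻¹ := by group
          _ = w * (k * (w⁻¹ * q * w)) * w⁻¹ := by rw [hcomm]
          _ = (w * k * w⁻¹) * q := by group
        haveI hKcomm : IsMulCommutative K := by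
          constructor
          constructor
          rintro ⟨a, ha⟩ ⟨b, hb⟩
          apply Subtype.ext
          show a * b = b * a
          exact (hKmem hb).2 a (hKmem ha).1
        have hKp : IsPGroup 2 ↥K := by
          rintro ⟨k, hk⟩
          obtain ⟨n, hn⟩ := hQ'p ⟨k, hKleQ' hk⟩
          refine ⟨n, ?_⟩
          apply Subtype.ext
          have := congrArg (Subtype.val : ↥Q' → G) hn
          rw [SubmonoidClass.coe_pow] at this
          simpa using this
        have hKbot : K ≠ ⊥ := by
          haveI := IsPGroup.center_nontrivial hQ'p
          obtain ⟨u, hu⟩ := exists_ne (1 : Subgroup.center ↥Q')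
          intro hKb
          apply hu
          have humem : ((u : ↥Q') : G) ∈ K := Subgroup.mem_map.mpr ⟨u, u.2, rfl⟩
          rw [hKb, Subgroup.mem_bot] at humem
          apply Subtype.ext; apply Subtype.ext
          exact humem
        -- cardinality bound for the quotient
        haveI : Nontrivial ↥K := (Subgroup.nontrivial_iff_ne_bot K).mpr hKbot
        have hKcard2 : 2 ≤ Nat.card ↥K := Finite.one_lt_card
        have hGcard : Nat.card G = Nat.card (G ⧸ K) * Nat.card ↥K :=
          Subgroup.card_eq_card_quotient_mul_card_subgroup K
        have hquotcard : Nat.card (G ⧸ K) ≤ nn := by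
          have h1 : 0 < Nat.card (G ⧸ K) := Nat.card_pos
          nlinarith [hGcard, hKcard2, hle, h1]
        -- set up the double quotient
        set N' : Subgroup (G ⧸ K) := N.map (QuotientGroup.mk' K) with hN'def
        haveI hN'norm : N'.Normal :=
          Subgroup.Normal.map ‹N.Normal› (QuotientGroup.mk' K) (QuotientGroup.mk'_surjective K)
        set ι := QuotientGroup.quotientQuotientEquivQuotient K N hKle with hιdef
        have hι : ∀ a : G, ι (((a : G ⧸ K) : (G ⧸ K) ⧸ N')) = (a : G ⧸ N) := fun a => rfl
        set g1 : G ⧸ K := (g : G ⧸ K) with hg1def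
        have hsymm : ι.symm (g : G ⧸ N) = ((g1 : (G ⧸ K) ⧸ N')) := by
          apply ι.injective
          rw [MulEquiv.apply_symm_apply]
          exact (hι g).symm
        have hreal1 : IsConj ((g1 : (G ⧸ K) ⧸ N')) ((g1 : (G ⧸ K) ⧸ N'))⁻¹ := by
          have := ι.symm.toMonoidHom.map_isConj hreal
          simp only [MulEquiv.coe_toMonoidHom, map_inv] at this
          rwa [hsymm] at this
        have hodd1 : Odd (orderOf ((g1 : (G ⧸ K) ⧸ N'))) := by
          have h1 := orderOf_injective ι.toMonoidHom ι.injective ((g1 : (G ⧸ K) ⧸ N'))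
          simp only [MulEquiv.coe_toMonoidHom] at h1
          rw [hι] at h1
          rw [← h1]
          exact hodd
        obtain ⟨h₁, hh1r, hh1o, hh1c⟩ := ih (G ⧸ K) hquotcard N' g1 hreal1 hodd1
        -- lift h₁ through K using caseB
        obtain ⟨w, hw⟩ := QuotientGroup.mk_surjective h₁
        have hwreal : IsConj ((w : G ⧸ K)) ((w : G ⧸ K))⁻¹ := by rw [hw]; exact hh1r
        have hwodd : Odd (orderOf (w : G ⧸ K)) := by rw [hw]; exact hh1o
        obtain ⟨h, hr, ho, hcos⟩ := caseB K hKp w hwreal hwodd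
        refine ⟨h, hr, ho, ?_⟩
        have hfin : ((h : G ⧸ K) : (G ⧸ K) ⧸ N') = ((g1 : (G ⧸ K) ⧸ N')) := by
          rw [hcos, hw]
          exact hh1c
        calc (h : G ⧸ N) = ι (((h : G ⧸ K) : (G ⧸ K) ⧸ N')) := (hι h).symm
        _ = ι ((g1 : (G ⧸ K) ⧸ N')) := by rw [hfin]
        _ = (g : G ⧸ N) := hι g
    · -- Frattini argument: pass to the proper subgroup N_G(Q')
      set H : Subgroup G := Subgroup.normalizer (((Q : Subgroup ↥N).map N.subtype : Subgroup G) : Set G) with hHdef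
      have hsup : H ⊔ N = ⊤ := Sylow.normalizer_sup_eq_top Q
      have hHne : H ≠ ⊤ := hnorm
      -- decompose g = n₀ * g₁ with n₀ ∈ N, g₁ ∈ H
      have hgmem : (g : G) ∈ ((N : Set G) * (H : Set G)) := by
        rw [← Subgroup.normal_mul N H]
        have : N ⊔ H = ⊤ := by rw [sup_comm]; exact hsup
        rw [this]
        exact Subgroup.mem_top g
      obtain ⟨n₀, hn₀, g₁, hg₁, hprod⟩ := Set.mem_mul.mp hgmem
      set N₁ : Subgroup ↥H := N.subgroupOf H with hN₁def
      have hle₁ : N₁ ≤ N.comap H.subtype := le_refl _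
      set ψ : (↥H ⧸ N₁) →* (G ⧸ N) := QuotientGroup.map N₁ N H.subtype hle₁ with hψdef
      have hψ : ∀ a : ↥H, ψ ((a : ↥H ⧸ N₁)) = ((a : G) : G ⧸ N) := by
        intro a
        rfl
      have hψinj : Function.Injective ψ := by
        rw [injective_iff_map_eq_one]
        intro q hq
        induction q using QuotientGroup.induction_on with
        | H a =>
          rw [hψ a, QuotientGroup.eq_one_iff] at hq
          rw [QuotientGroup.eq_one_iff]
          exact Subgroup.mem_subgroupOf.mpr hq
      -- coset equalities
      have hgcos : ((g₁ : G) : G ⧸ N) = (g : G ⧸ N) := by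
        rw [← hprod]
        have : ((n₀ * g₁ : G) : G ⧸ N) = ((n₀ : G) : G ⧸ N) * ((g₁ : G) : G ⧸ N) := by
          push_cast; rfl
        rw [this, (QuotientGroup.eq_one_iff (n₀ : G)).mpr hn₀, one_mul]
      set g₁' : ↥H := ⟨g₁, hg₁⟩ with hg₁'def
      -- conjugator
      obtain ⟨cb, hcb⟩ := isConj_iff.mp hreal
      obtain ⟨c, rfl⟩ := QuotientGroup.mk_surjective cb
      have hcmem : (c : G) ∈ ((N : Set G) * (H : Set G)) := by
        rw [← Subgroup.normal_mul N H]
        have : N ⊔ H = ⊤ := by rw [sup_comm]; exact hsup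
        rw [this]
        exact Subgroup.mem_top c
      obtain ⟨nc, hnc, c₁, hc₁, hcprod⟩ := Set.mem_mul.mp hcmem
      have hccos : ((c₁ : G) : G ⧸ N) = (c : G ⧸ N) := by
        rw [← hcprod]
        have : ((nc * c₁ : G) : G ⧸ N) = ((nc : G) : G ⧸ N) * ((c₁ : G) : G ⧸ N) := by
          push_cast; rfl
        rw [this, (QuotientGroup.eq_one_iff (nc : G)).mpr hnc, one_mul]
      set c₁' : ↥H := ⟨c₁, hc₁⟩ with hc₁'def
      -- transfer reality
      have hreal₁ : IsConj ((g₁' : ↥H ⧸ N₁)) ((g₁' : ↥H ⧸ N₁))⁻¹ := by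
        apply isConj_iff.mpr
        refine ⟨(c₁' : ↥H ⧸ N₁), ?_⟩
        apply hψinj
        rw [map_mul, map_mul, map_inv, map_inv, hψ, hψ]
        show ((c₁ : G) : G ⧸ N) * ((g₁ : G) : G ⧸ N) * ((c₁ : G) : G ⧸ N)⁻¹
            = (((g₁ : G) : G ⧸ N))⁻¹
        rw [hgcos, hccos]
        exact hcb
      -- transfer odd order
      have hord₁ : orderOf ((g₁' : ↥H ⧸ N₁)) = orderOf ((g : G ⧸ N)) := by
        have h1 := orderOf_injective ψ hψinj ((g₁' : ↥H ⧸ N₁))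
        rw [hψ, hgcos] at h1
        exact h1.symm
      have hodd₁ : Odd (orderOf ((g₁' : ↥H ⧸ N₁))) := by rw [hord₁]; exact hodd
      -- cardinality
      have hHcard : Nat.card ↥H ≤ nn := by
        have hdvd : Nat.card ↥H ∣ Nat.card G := Subgroup.card_subgroup_dvd_card H
        have hlt : Nat.card ↥H < Nat.card G := by
          rcases lt_or_eq_of_le (Nat.le_of_dvd Nat.card_pos hdvd) with h | h
          · exact h
          · exact absurd (Subgroup.eq_top_of_card_eq H h) hHne
        omega
      obtain ⟨h₁, hr₁, ho₁, hcos₁⟩ := ih ↥H hHcard N₁ g₁' hreal₁ hodd₁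
      refine ⟨(h₁ : G), ?_, ?_, ?_⟩
      · have := H.subtype.map_isConj hr₁
        rw [map_inv] at this
        exact this
      · have h2 := orderOf_injective H.subtype H.subtype_injective h₁
        simp only [Subgroup.coe_subtype] at h2
        rw [h2]
        exact ho₁
      · calc ((h₁ : G) : G ⧸ N) = ψ ((h₁ : ↥H ⧸ N₁)) := (hψ h₁).symm
        _ = ψ ((g₁' : ↥H ⧸ N₁)) := by rw [hcos₁]
        _ = (g : G ⧸ N) := by rw [hψ, hgcos]

/-- Real elements of odd order of `G/N` lift to real elements of odd order of `G`. -/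
theorem stmt_4 (G : Type*) [Group G] [Finite G] (N : Subgroup G) [N.Normal] (g : G)
    (hreal : IsConj ((g : G ⧸ N)) ((g : G ⧸ N))⁻¹)
    (hodd : Odd (orderOf (g : G ⧸ N))) :
    ∃ h : G, IsConj h h⁻¹ ∧ Odd (orderOf h) ∧ IsConj ((h : G ⧸ N)) (g : G ⧸ N) := by
  obtain ⟨h, hr, ho, hc⟩ := mainLemma (Nat.card G) G le_rfl N g hreal hodd
  exact ⟨h, hr, ho, hc ▸ IsConj.refl _⟩
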